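/- For a stationary strategy y, the following are equivalent: (C1) U¹(μ₀,y) ≥ U¹(μ,y) for every copula μ ∈ M(m); (C'1) for every permutation φ of S, Σ_{s∈S} u¹(s, y(·|s)) ≥ Σ_{s∈S} u¹(s, y(·|φ(s))), where u¹(s, y(·|a)) = Σ_{b∈B} y(b|a) u¹(s,b). -/

import Mathlib

/-- `μ` is a probability distribution on `S × S` whose two marginals both equal `m`. -/
def IsCopula {S : Type*} [Fintype S] (m : S → ℝ) (μ : S × S → ℝ) : Prop :=
  (∀ q, 0 ≤ μ q) ∧ (∑ q : S × S, μ q = 1) ∧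
    (∀ s, ∑ a, μ (s, a) = m s) ∧ (∀ a, ∑ s, μ (s, a) = m a)

/-- The diagonal copula `μ₀`. -/
def mu0 {S : Type*} [DecidableEq S] (m : S → ℝ) : S × S → ℝ :=
  fun q => if q.1 = q.2 then m q.1 else 0

/-- `y` is a stationary strategy: each `y a` is a probability distribution on `B`. -/
def IsStrategy {S B : Type*} [Fintype B] (y : S → B → ℝ) : Prop :=
  (∀ a b, 0 ≤ y a b) ∧ ∀ a, ∑ b, y a b = 1

/-- `U(μ, y) = Σ_{(s,a)} μ(s,a) Σ_b y(b|a) u(s,b)`. -/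
def Upay {S B : Type*} [Fintype S] [Fintype B]
    (u : S × B → ℝ) (μ : S × S → ℝ) (y : S → B → ℝ) : ℝ :=
  ∑ s, ∑ a, μ (s, a) * ∑ b, y a b * u (s, b)

section Aux

variable {S : Type*} [Fintype S] [DecidableEq S]

private lemma exists_out (m : S → ℝ) (μ : S × S → ℝ) (hp : ∀ q, 0 ≤ μ q)
    (hr : ∀ s, ∑ a, μ (s, a) = m s) (hc : ∀ a, ∑ s, μ (s, a) = m a)
    {t s : S} (ht : t ≠ s) (hts : 0 < μ (t, s)) :
    ∃ a, a ≠ s ∧ 0 < μ (s, a) := by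
  by_contra hcon
  push_neg at hcon
  have hzero : ∀ a, a ≠ s → μ (s, a) = 0 := fun a ha => le_antisymm (hcon a ha) (hp _)
  have hss : μ (s, s) = m s := by
    rw [← hr s]
    exact (Finset.sum_eq_single s (fun b _ hb => hzero b hb) (by simp)).symm
  have hle : μ (s, s) + μ (t, s) ≤ ∑ x, μ (x, s) := by
    have hpair : ({s, t} : Finset S).sum (fun x => μ (x, s)) = μ (s, s) + μ (t, s) :=
      Finset.sum_pair (Ne.symm ht)
    rw [← hpair]
    exact Finset.sum_le_sum_of_subset_of_nonneg (Finset.subset_univ _) (fun i _ _ => hp _)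
  rw [hc s, hss] at hle
  linarith

private lemma key (m : S → ℝ) (hm : ∀ s, 0 < m s) (hm1 : ∑ s, m s = 1) (f : S → S → ℝ)
    (hcyc : ∀ φ : Equiv.Perm S, ∑ s, f s (φ s) ≤ ∑ s, f s s) :
    ∀ n (μ : S × S → ℝ), IsCopula m μ →
      (Finset.univ.filter (fun q : S × S => q.1 ≠ q.2 ∧ 0 < μ q)).card ≤ n →
      ∑ s, ∑ a, μ (s, a) * f s a ≤ ∑ s, m s * f s s := by
  intro n
  induction n with
  | zero =>
    rintro μ ⟨hp, hsum, hr, hc⟩ hcard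
    have hfe : Finset.univ.filter (fun q : S × S => q.1 ≠ q.2 ∧ 0 < μ q) = ∅ :=
      Finset.card_eq_zero.mp (Nat.le_zero.mp hcard)
    have hzero : ∀ s a : S, s ≠ a → μ (s, a) = 0 := by
      intro s a hsa
      by_contra h
      have hpos : 0 < μ (s, a) := lt_of_le_of_ne (hp _) (Ne.symm h)
      have hmem : ((s, a) : S × S) ∈
          Finset.univ.filter (fun q : S × S => q.1 ≠ q.2 ∧ 0 < μ q) := by
        simp [hsa, hpos]
      rw [hfe] at hmem
      simp at hmem
    have hdiag : ∀ s, μ (s, s) = m s := by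
      intro s
      rw [← hr s]
      exact (Finset.sum_eq_single s (fun b _ hb => hzero s b (Ne.symm hb)) (by simp)).symm
    apply le_of_eq
    refine Finset.sum_congr rfl (fun s _ => ?_)
    rw [Finset.sum_eq_single s (fun b _ hb => by rw [hzero s b (Ne.symm hb), zero_mul])
      (by simp), hdiag]
  | succ n ih =>
    intro μ hcop hcard
    obtain ⟨hp, hsum, hr, hc⟩ := hcop
    by_cases hle : (Finset.univ.filter (fun q : S × S => q.1 ≠ q.2 ∧ 0 < μ q)).card ≤ n
    · exact ih μ ⟨hp, hsum, hr, hc⟩ hle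
    · have hne : (Finset.univ.filter (fun q : S × S => q.1 ≠ q.2 ∧ 0 < μ q)).Nonempty := by
        rw [Finset.nonempty_iff_ne_empty]
        intro h
        exact hle (by simp [h])
      obtain ⟨q0, hq0⟩ := hne
      rw [Finset.mem_filter] at hq0
      obtain ⟨-, hq01, hq02⟩ := hq0
      classical
      -- the walk along positive off-diagonal entries
      set step : S → S := fun s =>
        if h : ∃ a, a ≠ s ∧ 0 < μ (s, a) then h.choose else s with hstepdef
      set g : ℕ → S := fun k => step^[k] q0.2 with hgdef
      have hg0 : g 0 = q0.2 := rfl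
      have hgsucc : ∀ k, g (k + 1) = step (g k) := fun k =>
        Function.iterate_succ_apply' step k q0.2
      have keystep : ∀ s : S, (∃ t, t ≠ s ∧ 0 < μ (t, s)) →
          step s ≠ s ∧ 0 < μ (s, step s) := by
        rintro s ⟨t, ht, hts⟩
        have hex : ∃ a, a ≠ s ∧ 0 < μ (s, a) := exists_out m μ hp hr hc ht hts
        have hstep : step s = hex.choose := by
          simp only [hstepdef]
          exact dif_pos hex
        rw [hstep]
        exact ⟨hex.choose_spec.1, hex.choose_spec.2⟩
      have hin : ∀ k, ∃ t, t ≠ g k ∧ 0 < μ (t, g k) := by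
        intro k
        induction k with
        | zero => exact ⟨q0.1, hq01, by rw [hg0]; simpa using hq02⟩
        | succ k ihk =>
          obtain ⟨h1, h2⟩ := keystep (g k) ihk
          rw [hgsucc k]
          exact ⟨g k, fun h => h1 h.symm, h2⟩
      have hedge : ∀ k, g (k + 1) ≠ g k ∧ 0 < μ (g k, g (k + 1)) := by
        intro k
        rw [hgsucc k]
        exact keystep (g k) (hin k)
      -- pigeonhole: a repeated value
      have hpig : ∃ k, ∃ p, p < k ∧ g p = g k := by
        obtain ⟨i, j, hij, hgij⟩ := Fintype.exists_ne_map_eq_of_card_lt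
          (fun k : Fin (Fintype.card S + 1) => g k) (by simp)
        rcases lt_or_gt_of_ne hij with h | h
        · exact ⟨j, i, h, hgij⟩
        · exact ⟨i, j, h, hgij.symm⟩
      set j := Nat.find hpig with hjdef
      obtain ⟨i, hij, hgij⟩ := Nat.find_spec hpig
      have hmin : ∀ k, k < j → ¬∃ p, p < k ∧ g p = g k := fun k hk => Nat.find_min hpig hk
      have hlen2 : 2 ≤ j - i := by
        rcases Nat.lt_or_ge (j - i) 2 with h | h
        · exfalso
          have h1 : j = i + 1 := by omega
          exact (hedge i).1 (h1 ▸ hgij.symm)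
        · exact h
      set len := j - i with hlendef
      set l : List S := (List.range len).map (fun t => g (i + t)) with hldef
      have hlen : l.length = len := by simp [hldef]
      have hgetl : ∀ (t : ℕ) (h : t < l.length), l[t] = g (i + t) := by
        intro t h
        simp [hldef]
      have hmem : ∀ x : S, x ∈ l ↔ ∃ t, t < len ∧ g (i + t) = x := by
        intro x
        constructor
        · intro hx
          obtain ⟨t, ht, rfl⟩ := List.mem_map.mp hx
          exact ⟨t, List.mem_range.mp ht, rfl⟩
        · rintro ⟨t, ht, rfl⟩
          exact List.mem_map.mpr ⟨t, List.mem_range.mpr ht, rfl⟩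
      have hnodup : l.Nodup := by
        rw [hldef]
        refine List.Nodup.map_on ?_ List.nodup_range
        intro t ht t' ht' heq
        simp only [List.mem_range] at ht ht'
        by_contra hne'
        rcases lt_or_gt_of_ne hne' with h | h
        · exact hmin (i + t') (by omega) ⟨i + t, by omega, heq⟩
        · exact hmin (i + t) (by omega) ⟨i + t', by omega, heq.symm⟩
      set c : Equiv.Perm S := l.formPerm with hcdef
      have hcstep : ∀ t, t < len → c (g (i + t)) = g (i + t + 1) := by
        intro t ht
        have hlt : t < l.length := by rw [hlen]; exact ht
        have h1 := List.formPerm_apply_getElem l hnodup t hlt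
        rw [hgetl t hlt, hgetl _ (Nat.mod_lt _ (by omega))] at h1
        rcases Nat.lt_or_ge (t + 1) len with h2 | h2
        · have hm2 : (t + 1) % l.length = t + 1 := by rw [hlen]; exact Nat.mod_eq_of_lt h2
          rw [hm2] at h1
          rw [← hcdef] at h1
          rw [show i + t + 1 = i + (t + 1) from by omega]
          exact h1
        · have h3 : t + 1 = len := by omega
          have hm2 : (t + 1) % l.length = 0 := by rw [hlen, h3]; exact Nat.mod_self len
          rw [hm2] at h1
          rw [← hcdef] at h1
          rw [h1]
          have h4 : i + t + 1 = j := by omega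
          rw [h4]
          simpa using hgij
      have hmemg : ∀ t, t < len → g (i + t) ∈ l := fun t ht => (hmem _).mpr ⟨t, ht, rfl⟩
      have hE1 : ∀ s ∈ l, c s ≠ s := by
        intro s hs
        obtain ⟨t, ht, rfl⟩ := (hmem s).mp hs
        rw [hcstep t ht]
        exact (hedge (i + t)).1
      have hE3 : ∀ s ∈ l, 0 < μ (s, c s) := by
        intro s hs
        obtain ⟨t, ht, rfl⟩ := (hmem s).mp hs
        rw [hcstep t ht]
        exact (hedge (i + t)).2
      have hE4 : ∀ s : S, s ∉ l → c s = s := fun s hs => List.formPerm_apply_of_notMem hs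
      have hE5 : ∀ a : S, c⁻¹ a ∈ l ↔ a ∈ l := by
        intro a
        constructor
        · intro h
          have h2 : c (c⁻¹ a) ∈ l := List.formPerm_apply_mem_of_mem h
          simpa using h2
        · intro h
          by_contra h2
          have h3 : c (c⁻¹ a) = c⁻¹ a := hE4 _ h2
          have h4 : a = c⁻¹ a := by simpa using h3
          rw [← h4] at h2
          exact h2 h
      set lset : Finset S := l.toFinset with hlsetdef
      have hlsmem : ∀ x : S, x ∈ lset ↔ x ∈ l := fun x => List.mem_toFinset
      have hlsne : lset.Nonempty := ⟨g (i + 0), (hlsmem _).mpr (hmemg 0 (by omega))⟩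
      set δ : ℝ := lset.inf' hlsne (fun s => μ (s, c s)) with hδdef
      have hδpos : 0 < δ := by
        rw [hδdef, Finset.lt_inf'_iff]
        exact fun b hb => hE3 b ((hlsmem b).mp hb)
      have hδle : ∀ s ∈ lset, δ ≤ μ (s, c s) := fun s hs => Finset.inf'_le _ hs
      obtain ⟨s₁, hs₁, hs₁eq⟩ := Finset.exists_mem_eq_inf' hlsne (fun s => μ (s, c s))
      set μ' : S × S → ℝ := fun q =>
        μ q - (if q.1 ∈ lset ∧ q.2 = c q.1 then δ else 0)
            + (if q.1 ∈ lset ∧ q.2 = q.1 then δ else 0) with hμ'def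
      have hnot_both : ∀ s a : S, s ∈ lset → a = c s → a ≠ s := by
        intro s a hs hac
        rw [hac]
        exact hE1 s ((hlsmem s).mp hs)
      have hp' : ∀ q, 0 ≤ μ' q := by
        rintro ⟨s, a⟩
        simp only [hμ'def]
        by_cases h1 : s ∈ lset ∧ a = c s
        · rw [if_pos h1, if_neg (fun h2 => hnot_both s a h1.1 h1.2 h2.2)]
          have h3 : δ ≤ μ (s, a) := by rw [h1.2]; exact hδle s h1.1
          linarith
        · rw [if_neg h1]
          have h4 := hp (s, a)
          by_cases h2 : s ∈ lset ∧ a = s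
          · rw [if_pos h2]; linarith
          · rw [if_neg h2]; linarith
      have hind1row : ∀ s, ∑ a, (if s ∈ lset ∧ a = c s then δ else 0)
          = (if s ∈ lset then δ else 0) := by
        intro s
        by_cases hs : s ∈ lset <;> simp [hs]
      have hind2row : ∀ s, ∑ a, (if s ∈ lset ∧ a = s then δ else 0)
          = (if s ∈ lset then δ else 0) := by
        intro s
        by_cases hs : s ∈ lset <;> simp [hs]
      have hr' : ∀ s, ∑ a, μ' (s, a) = m s := by
        intro s
        simp only [hμ'def]
        rw [Finset.sum_add_distrib, Finset.sum_sub_distrib, hind1row, hind2row, hr]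
        ring
      have hind1col : ∀ a, ∑ s, (if s ∈ lset ∧ a = c s then δ else 0)
          = (if a ∈ lset then δ else 0) := by
        intro a
        have hcond : ∀ s : S, (s ∈ lset ∧ a = c s) ↔ (s = c⁻¹ a ∧ a ∈ lset) := by
          intro s
          constructor
          · rintro ⟨hs, rfl⟩
            refine ⟨by simp, ?_⟩
            rw [hlsmem]
            exact List.formPerm_apply_mem_of_mem ((hlsmem s).mp hs)
          · rintro ⟨rfl, ha⟩
            refine ⟨?_, by simp⟩
            rw [hlsmem]
            exact (hE5 a).mpr ((hlsmem a).mp ha)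
        simp_rw [hcond]
        by_cases ha : a ∈ lset <;> simp [ha]
      have hind2col : ∀ a, ∑ s, (if s ∈ lset ∧ a = s then δ else 0)
          = (if a ∈ lset then δ else 0) := by
        intro a
        have hcond : ∀ s : S, (s ∈ lset ∧ a = s) ↔ (s = a ∧ a ∈ lset) := by
          intro s
          constructor
          · rintro ⟨hs, rfl⟩; exact ⟨rfl, hs⟩
          · rintro ⟨rfl, ha⟩; exact ⟨ha, rfl⟩
        simp_rw [hcond]
        by_cases ha : a ∈ lset <;> simp [ha]
      have hc' : ∀ a, ∑ s, μ' (s, a) = m a := by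
        intro a
        simp only [hμ'def]
        rw [Finset.sum_add_distrib, Finset.sum_sub_distrib, hind1col, hind2col, hc]
        ring
      have hsum' : ∑ q : S × S, μ' q = 1 := by
        rw [Fintype.sum_prod_type]
        simp_rw [hr']
        exact hm1
      -- payoff decomposition
      have hpay1 : ∀ s, ∑ a, (if s ∈ lset ∧ a = c s then δ else 0) * f s a
          = (if s ∈ lset then δ * f s (c s) else 0) := by
        intro s
        by_cases hs : s ∈ lset <;> simp [hs, ite_mul]
      have hpay2 : ∀ s, ∑ a, (if s ∈ lset ∧ a = s then δ else 0) * f s a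
          = (if s ∈ lset then δ * f s s else 0) := by
        intro s
        by_cases hs : s ∈ lset <;> simp [hs, ite_mul]
      have hdecomp : ∑ s, ∑ a, μ (s, a) * f s a
          = (∑ s, ∑ a, μ' (s, a) * f s a)
            + (∑ s ∈ lset, δ * f s (c s)) - (∑ s ∈ lset, δ * f s s) := by
        have hterm : ∀ s a : S, μ (s, a) * f s a = μ' (s, a) * f s a
            + (if s ∈ lset ∧ a = c s then δ else 0) * f s a
            - (if s ∈ lset ∧ a = s then δ else 0) * f s a := by
          intro s a
          simp only [hμ'def]
          ring
        simp_rw [hterm, Finset.sum_sub_distrib, Finset.sum_add_distrib, hpay1, hpay2,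
          Finset.sum_ite_mem, Finset.univ_inter]
      have hkey : ∑ s ∈ lset, f s (c s) ≤ ∑ s ∈ lset, f s s := by
        have h1 := hcyc c
        have h2 : ∑ s, f s (c s) = ∑ s ∈ lset, f s (c s) + ∑ s ∈ lsetᶜ, f s (c s) :=
          (Finset.sum_add_sum_compl lset _).symm
        have h3 : ∑ s, f s s = ∑ s ∈ lset, f s s + ∑ s ∈ lsetᶜ, f s (c s) := by
          rw [← Finset.sum_add_sum_compl lset (fun s => f s s)]
          congr 1
          refine Finset.sum_congr rfl (fun s hs => ?_)
          have hsl : s ∉ l := fun h => (Finset.mem_compl.mp hs) ((hlsmem s).mpr h)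
          rw [hE4 s hsl]
        rw [h2, h3] at h1
        linarith
      -- strict decrease of the off-diagonal support
      have hsub : Finset.univ.filter (fun q : S × S => q.1 ≠ q.2 ∧ 0 < μ' q)
          ⊆ Finset.univ.filter (fun q : S × S => q.1 ≠ q.2 ∧ 0 < μ q) := by
        rintro ⟨s, a⟩ hq
        rw [Finset.mem_filter] at hq ⊢
        obtain ⟨-, hsa, hpos⟩ := hq
        refine ⟨Finset.mem_univ _, hsa, ?_⟩
        simp only [hμ'def] at hpos
        rw [if_neg (fun h2 : s ∈ lset ∧ a = s => hsa h2.2.symm)] at hpos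
        have h0 : (0:ℝ) ≤ if s ∈ lset ∧ a = c s then δ else 0 := by
          split_ifs
          · exact le_of_lt hδpos
          · exact le_refl 0
        simp only at hsa
        linarith
      have hmemq1 : ((s₁, c s₁) : S × S) ∈
          Finset.univ.filter (fun q : S × S => q.1 ≠ q.2 ∧ 0 < μ q) := by
        rw [Finset.mem_filter]
        exact ⟨Finset.mem_univ _, Ne.symm (hE1 s₁ ((hlsmem _).mp hs₁)),
          hE3 s₁ ((hlsmem _).mp hs₁)⟩
      have hnotmem : ((s₁, c s₁) : S × S) ∉
          Finset.univ.filter (fun q : S × S => q.1 ≠ q.2 ∧ 0 < μ' q) := by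
        rw [Finset.mem_filter]
        rintro ⟨-, -, hpos⟩
        have hcc : ¬ (c s₁ = s₁) := hE1 s₁ ((hlsmem _).mp hs₁)
        have hval : μ' (s₁, c s₁) = μ (s₁, c s₁) - δ := by
          simp [hμ'def, hs₁, hcc]
        rw [hval, ← hs₁eq] at hpos
        linarith
      have hcard' : (Finset.univ.filter (fun q : S × S => q.1 ≠ q.2 ∧ 0 < μ' q)).card
          < (Finset.univ.filter (fun q : S × S => q.1 ≠ q.2 ∧ 0 < μ q)).card :=
        Finset.card_lt_card ((Finset.ssubset_iff_of_subset hsub).mpr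
          ⟨(s₁, c s₁), hmemq1, hnotmem⟩)
      have hfinal := ih μ' ⟨hp', hsum', hr', hc'⟩ (by omega)
      rw [hdecomp]
      have hmul : ∑ s ∈ lset, δ * f s (c s) ≤ ∑ s ∈ lset, δ * f s s := by
        rw [← Finset.mul_sum, ← Finset.mul_sum]
        exact mul_le_mul_of_nonneg_left hkey (le_of_lt hδpos)
      linarith

end Aux

theorem stmt1 {S B : Type*} [Fintype S] [DecidableEq S] [Nonempty S]
    [Fintype B] [Nonempty B]
    (m : S → ℝ) (hm : ∀ s, 0 < m s) (hm1 : ∑ s, m s = 1)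
    (u1 : S × B → ℝ) (y : S → B → ℝ) (hy : IsStrategy y) :
    (∀ μ : S × S → ℝ, IsCopula m μ → Upay u1 (mu0 m) y ≥ Upay u1 μ y) ↔
      (∀ φ : Equiv.Perm S,
        ∑ s, ∑ b, y s b * u1 (s, b) ≥ ∑ s, ∑ b, y (φ s) b * u1 (s, b)) := by
  classical
  set f : S → S → ℝ := fun s a => ∑ b, y a b * u1 (s, b) with hfdef
  have hU : ∀ μ : S × S → ℝ, Upay u1 μ y = ∑ s, ∑ a, μ (s, a) * f s a := fun μ => rfl
  have hU0 : Upay u1 (mu0 m) y = ∑ s, m s * f s s := by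
    rw [hU]
    refine Finset.sum_congr rfl (fun s _ => ?_)
    rw [Finset.sum_eq_single s (fun b _ hb => by simp [mu0, Ne.symm hb]) (by simp)]
    simp [mu0]
  have hgoal1 : ∀ φ : Equiv.Perm S,
      (∑ s, ∑ b, y s b * u1 (s, b)) = ∑ s, f s s := fun _ => rfl
  have hgoal2 : ∀ φ : Equiv.Perm S,
      (∑ s, ∑ b, y (φ s) b * u1 (s, b)) = ∑ s, f s (φ s) := fun _ => rfl
  constructor
  · intro h φ
    rw [ge_iff_le, hgoal1 φ, hgoal2 φ]
    -- construct the perturbed copula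
    set ε := Finset.univ.inf' Finset.univ_nonempty m with hεdef
    have hεpos : 0 < ε := by
      rw [hεdef, Finset.lt_inf'_iff]
      exact fun b _ => hm b
    have hεle : ∀ s, ε ≤ m s := fun s => Finset.inf'_le _ (Finset.mem_univ s)
    set ν : S × S → ℝ := fun q => mu0 m q
        + ε * ((if q.2 = φ q.1 then 1 else 0) - (if q.2 = q.1 then 1 else 0)) with hνdef
    have hrow : ∀ s, ∑ a, ν (s, a) = m s := by
      intro s
      have hterm : ∀ a : S, ν (s, a) = mu0 m (s, a)
          + ε * (if a = φ s then (1:ℝ) else 0) - ε * (if a = s then (1:ℝ) else 0) := by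
        intro a
        simp only [hνdef]
        ring
      simp_rw [hterm, Finset.sum_sub_distrib, Finset.sum_add_distrib, ← Finset.mul_sum]
      have h1 : ∑ a, mu0 m (s, a) = m s := by
        simp [mu0]
      rw [h1]
      simp
    have hcol : ∀ a, ∑ s, ν (s, a) = m a := by
      intro a
      have hterm : ∀ s : S, ν (s, a) = mu0 m (s, a)
          + ε * (if s = φ.symm a then (1:ℝ) else 0) - ε * (if s = a then (1:ℝ) else 0) := by
        intro s
        simp only [hνdef, mu0]
        have hiff : (a = φ s) ↔ (s = φ.symm a) := by
          constructor
          · intro h2; simp [h2]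
          · intro h2; simp [h2]
        rw [if_congr hiff rfl rfl, if_congr (eq_comm (a := a) (b := s)) rfl rfl]
        ring
      simp_rw [hterm, Finset.sum_sub_distrib, Finset.sum_add_distrib, ← Finset.mul_sum]
      have h1 : ∑ s, mu0 m (s, a) = m a := by
        simp [mu0, Finset.sum_ite_eq']
      rw [h1]
      simp
    have hcop : IsCopula m ν := by
      refine ⟨?_, ?_, hrow, hcol⟩
      · rintro ⟨s, a⟩
        simp only [hνdef, mu0]
        by_cases h1 : s = a
        · by_cases h2 : a = φ s
          · rw [if_pos h1, if_pos h2, if_pos h1.symm]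
            have h3 : m s + ε * ((1:ℝ) - 1) = m s := by ring
            rw [h3]
            exact le_of_lt (hm s)
          · rw [if_pos h1, if_neg h2, if_pos h1.symm]
            have h4 := hεle s
            have h3 : m s + ε * ((0:ℝ) - 1) = m s - ε := by ring
            rw [h3]
            linarith
        · by_cases h2 : a = φ s
          · rw [if_neg h1, if_pos h2, if_neg (fun h => h1 h.symm)]
            have h3 : (0:ℝ) + ε * ((1:ℝ) - 0) = ε := by ring
            rw [h3]
            exact le_of_lt hεpos
          · rw [if_neg h1, if_neg h2, if_neg (fun h => h1 h.symm)]
            have h3 : (0:ℝ) + ε * ((0:ℝ) - 0) = 0 := by ring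
            rw [h3]
      · rw [Fintype.sum_prod_type]
        simp_rw [hrow]
        exact hm1
    have hν : Upay u1 ν y = Upay u1 (mu0 m) y + ε * ((∑ s, f s (φ s)) - ∑ s, f s s) := by
      rw [hU, hU0]
      have e1 : ∀ s, ∑ a, ν (s, a) * f s a
          = m s * f s s + ε * (f s (φ s) - f s s) := by
        intro s
        have hterm : ∀ a : S, ν (s, a) * f s a = mu0 m (s, a) * f s a
            + ε * ((if a = φ s then (1:ℝ) else 0) * f s a)
            - ε * ((if a = s then (1:ℝ) else 0) * f s a) := by
          intro a
          simp only [hνdef]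
          ring
        simp_rw [hterm, Finset.sum_sub_distrib, Finset.sum_add_distrib, ← Finset.mul_sum]
        have i0 : ∑ a, mu0 m (s, a) * f s a = m s * f s s := by
          rw [Finset.sum_eq_single s (fun b _ hb => by simp [mu0, Ne.symm hb]) (by simp)]
          simp [mu0]
        have i1 : ∑ a, (if a = φ s then (1:ℝ) else 0) * f s a = f s (φ s) := by
          simp [ite_mul]
        have i2 : ∑ a, (if a = s then (1:ℝ) else 0) * f s a = f s s := by
          simp [ite_mul]
        rw [i0, i1, i2]
        ring
      calc ∑ s, ∑ a, ν (s, a) * f s a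
          = ∑ s, (m s * f s s + ε * (f s (φ s) - f s s)) :=
            Finset.sum_congr rfl fun s _ => e1 s
        _ = _ := by
            rw [Finset.sum_add_distrib, ← Finset.mul_sum, Finset.sum_sub_distrib]
    have h2 := h ν hcop
    rw [hν] at h2
    by_contra hX
    push_neg at hX
    have := mul_pos hεpos (by linarith : (0:ℝ) < (∑ s, f s (φ s)) - ∑ s, f s s)
    linarith
  · intro h μ hμ
    rw [ge_iff_le, hU μ, hU0]
    refine key m hm hm1 f ?_ _ μ hμ le_rfl
    intro φ
    have h2 := h φ
    rw [ge_iff_le, hgoal1 φ, hgoal2 φ] at h2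
    exact h2
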